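/- For all real z > 0 and all real ν > 1/2, one has ν·log(z/2) − log(Γ(ν+1)) + (1/(2(ν+1)))·log(cosh(z)) < log(I_ν(z)) < ν·log(z/2) − log(Γ(ν+1)) + log(cosh(z)). -/

import Mathlib

lemma cosh_tsum (z : ℝ) : Real.cosh z = ∑' k : ℕ, z^(2*k) / ((2*k).factorial : ℝ) := by
  have he : ∀ w : ℝ, Real.exp w = ∑' n : ℕ, w^n / n.factorial := by
    intro w
    rw [Real.exp_eq_exp_ℝ, NormedSpace.exp_eq_tsum_div]
  have hf : ∀ w : ℝ, Summable (fun n : ℕ => w^n / (n.factorial : ℝ)) :=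
    fun w => Real.summable_pow_div_factorial w
  have key : ∀ n : ℕ, (z^n + (-z)^n) / (2 * (n.factorial:ℝ)) =
      (z^n/n.factorial + (-z)^n/n.factorial)/2 := by intro n; ring
  have hsum : Summable (fun n : ℕ => (z^n + (-z)^n) / (2 * (n.factorial:ℝ))) := by
    simp only [key]
    exact (((hf z).add (hf (-z))).div_const 2)
  have heven : Summable (fun k : ℕ => (z^(2*k) + (-z)^(2*k)) / (2 * ((2*k).factorial:ℝ))) :=
    hsum.comp_injective (fun a b hab => by omega)
  have hodd : Summable (fun k : ℕ => (z^(2*k+1) + (-z)^(2*k+1)) / (2 * ((2*k+1).factorial:ℝ))) :=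
    hsum.comp_injective (fun a b hab => by omega)
  have h0 := tsum_even_add_odd (f := fun n : ℕ => (z^n + (-z)^n) / (2 * ((n).factorial:ℝ)))
    heven hodd
  have hoz : ∀ k : ℕ, (z^(2*k+1) + (-z)^(2*k+1)) / (2 * ((2*k+1).factorial:ℝ)) = 0 := by
    intro k
    rw [Odd.neg_pow ⟨k, by ring⟩]
    ring
  have hez : ∀ k : ℕ, (z^(2*k) + (-z)^(2*k)) / (2 * ((2*k).factorial:ℝ)) =
      z^(2*k) / ((2*k).factorial:ℝ) := by
    intro k
    rw [Even.neg_pow ⟨k, by ring⟩]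
    have : ((2*k).factorial:ℝ) ≠ 0 := Nat.cast_ne_zero.2 (Nat.factorial_ne_zero _)
    field_simp
    ring
  simp only [hoz, hez, tsum_zero, add_zero] at h0
  rw [h0]
  have : ∑' n : ℕ, (z^n + (-z)^n) / (2 * ((n).factorial:ℝ))
      = (Real.exp z + Real.exp (-z)) / 2 := by
    simp only [key]
    rw [tsum_div_const, Summable.tsum_add (hf z) (hf (-z)), he z, he (-z)]
  rw [this, Real.cosh_eq]

lemma F_nonneg {x : ℝ} (hx : 0 ≤ x) :
    x * Real.sinh x / Real.cosh x ≤ 2 * Real.log (Real.cosh x) := by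
  set F : ℝ → ℝ := fun x => 2 * Real.log (Real.cosh x) - x * Real.sinh x / Real.cosh x with hF
  have hd : ∀ y : ℝ, HasDerivAt F
      (2 * (Real.sinh y / Real.cosh y) -
        ((1 * Real.sinh y + y * Real.cosh y) * Real.cosh y -
          y * Real.sinh y * Real.sinh y) / (Real.cosh y)^2) y := by
    intro y
    have hc := Real.cosh_pos y
    exact ((((Real.hasDerivAt_cosh y).log hc.ne').const_mul 2)).sub
      (((hasDerivAt_id y).mul (Real.hasDerivAt_sinh y)).div (Real.hasDerivAt_cosh y) hc.ne')
  have hdiff : Differentiable ℝ F := fun y => (hd y).differentiableAt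
  have hderiv : ∀ y : ℝ, 0 ≤ y → 0 ≤ deriv F y := by
    intro y hy
    rw [(hd y).deriv]
    have hc := Real.cosh_pos y
    have hid : Real.cosh y ^ 2 = Real.sinh y ^ 2 + 1 := Real.cosh_sq y
    have hsc : y ≤ Real.sinh y * Real.cosh y := by
      rcases eq_or_lt_of_le hy with h | h
      · simp [← h]
      · have h1 : y < Real.sinh y := Real.self_lt_sinh_iff.mpr h
        have h2 : 1 ≤ Real.cosh y := Real.one_le_cosh y
        nlinarith
    have key : 2 * (Real.sinh y / Real.cosh y) -
        ((1 * Real.sinh y + y * Real.cosh y) * Real.cosh y -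
          y * Real.sinh y * Real.sinh y) / (Real.cosh y)^2
        = (Real.sinh y * Real.cosh y - y) / (Real.cosh y)^2 := by
      field_simp
      linear_combination (-y) * hid
    rw [key]
    exact div_nonneg (by linarith) (by positivity)
  have hmono : MonotoneOn F (Set.Ici 0) := by
    apply monotoneOn_of_deriv_nonneg (convex_Ici 0) hdiff.continuous.continuousOn
      hdiff.differentiableOn
    intro y hy
    rw [interior_Ici] at hy
    exact hderiv y (le_of_lt hy)
  have h0 : F 0 = 0 := by simp [hF]
  have hfx := hmono (Set.self_mem_Ici) hx hx
  rw [h0] at hfx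
  have : 0 ≤ 2 * Real.log (Real.cosh x) - x * Real.sinh x / Real.cosh x := hfx
  linarith

lemma logcosh_div_sq_antitone {y x : ℝ} (hy : 0 < y) (hyx : y ≤ x) :
    Real.log (Real.cosh x) / x^2 ≤ Real.log (Real.cosh y) / y^2 := by
  set G : ℝ → ℝ := fun x => Real.log (Real.cosh x) / x^2 with hG
  have hd : ∀ t : ℝ, t ≠ 0 → HasDerivAt G
      ((Real.sinh t / Real.cosh t * t^2 - Real.log (Real.cosh t) * (↑2 * t^1)) / (t^2)^2) t := by
    intro t ht
    exact ((Real.hasDerivAt_cosh t).log (Real.cosh_pos t).ne').div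
      (hasDerivAt_pow 2 t) (pow_ne_zero 2 ht)
  have hanti : AntitoneOn G (Set.Ioi 0) := by
    apply antitoneOn_of_deriv_nonpos (convex_Ioi 0)
    · intro t ht
      exact ((hd t (ne_of_gt ht)).differentiableAt).continuousAt.continuousWithinAt
    · intro t ht
      rw [interior_Ioi] at ht
      exact ((hd t (ne_of_gt ht)).differentiableAt).differentiableWithinAt
    · intro t ht
      rw [interior_Ioi] at ht
      rw [(hd t (ne_of_gt ht)).deriv]
      apply div_nonpos_of_nonpos_of_nonneg _ (by positivity)
      have hF := F_nonneg (le_of_lt ht)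
      have hc := Real.cosh_pos t
      have heq : Real.sinh t / Real.cosh t * t^2 = t * (t * Real.sinh t / Real.cosh t) := by
        field_simp
      rw [heq]
      have h2 : t * Real.sinh t / Real.cosh t ≤ 2 * Real.log (Real.cosh t) := hF
      have ht' : (0:ℝ) < t := ht
      have h3 := mul_le_mul_of_nonneg_left h2 ht'.le
      simp only [pow_one]
      nlinarith [h3]
  exact hanti (Set.mem_Ioi.mpr hy) (Set.mem_Ioi.mpr (lt_of_lt_of_le hy hyx)) hyx

lemma gamma_prod (ν : ℝ) (hν : 0 < ν) (k : ℕ) :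
    Real.Gamma (ν + k + 1) = Real.Gamma (ν + 1) * ∏ j ∈ Finset.range k, (ν + 1 + j) := by
  induction k with
  | zero => simp
  | succ n ih =>
    have h1 : (ν + ((n:ℕ)+1:ℕ) + 1 : ℝ) = (ν + n + 1) + 1 := by push_cast; ring
    rw [h1, Real.Gamma_add_one (by positivity), ih, Finset.prod_range_succ]
    push_cast
    ring

lemma fact_two_mul (k : ℕ) :
    ((2*k).factorial : ℝ) = 4^k * k.factorial * ∏ j ∈ Finset.range k, ((j:ℝ) + 1/2) := by
  induction k with
  | zero => simp
  | succ n ih =>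
    have h : 2*(n+1) = (2*n+1)+1 := by ring
    rw [h, Nat.factorial_succ, Nat.factorial_succ, Nat.factorial_succ,
      Finset.prod_range_succ]
    push_cast
    rw [ih]
    ring

/-- The modified Bessel function of the first kind of order `ν`, defined for `z > 0` by
`I_ν(z) = ∑_{k=0}^∞ (1/(k! Γ(ν+k+1))) (z/2)^(ν+2k)`. -/
noncomputable def besselI (ν z : ℝ) : ℝ :=
  ∑' k : ℕ, (1 / (k.factorial * Real.Gamma (ν + (k : ℝ) + 1))) * (z / 2) ^ (ν + 2 * (k : ℝ))

theorem log_besselI_bounds (z ν : ℝ) (hz : 0 < z) (hν : 1/2 < ν) :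
    ν * Real.log (z / 2) - Real.log (Real.Gamma (ν + 1))
        + (1 / (2 * (ν + 1))) * Real.log (Real.cosh z) < Real.log (besselI ν z) ∧
      Real.log (besselI ν z) <
        ν * Real.log (z / 2) - Real.log (Real.Gamma (ν + 1)) + Real.log (Real.cosh z) := by
  have hz2 : 0 < z / 2 := by linarith
  have hν0 : (0:ℝ) < ν := by linarith
  set q : ℝ := (z/2)^2 with hq
  have hqpos : 0 < q := by positivity
  set P : ℕ → ℝ := fun k => ∏ j ∈ Finset.range k, (ν + 1 + j) with hP
  set D : ℕ → ℝ := fun k => ∏ j ∈ Finset.range k, ((j:ℝ) + 1/2) with hD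
  have hPpos : ∀ k, 0 < P k := fun k => Finset.prod_pos (fun j _ => by positivity)
  have hDpos : ∀ k, 0 < D k := fun k => Finset.prod_pos (fun j _ => by positivity)
  have hP1 : ∀ k, 1 ≤ P k := by
    intro k
    have h1 : (1:ℝ) = ∏ _j ∈ Finset.range k, (1:ℝ) := by simp
    rw [hP, h1]
    apply Finset.prod_le_prod (fun j _ => by norm_num)
    intro j _
    have : (0:ℝ) ≤ j := Nat.cast_nonneg j
    linarith
  set g : ℕ → ℝ := fun k => q^k / (k.factorial * P k) with hg
  have hfacpos : ∀ k : ℕ, (0:ℝ) < k.factorial := fun k => Nat.cast_pos.mpr k.factorial_pos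
  have hgpos : ∀ k, 0 < g k :=
    fun k => div_pos (pow_pos hqpos k) (mul_pos (hfacpos k) (hPpos k))
  have hgsum : Summable g := by
    apply Summable.of_nonneg_of_le (fun k => (hgpos k).le) _ (Real.summable_pow_div_factorial q)
    intro k
    have h1 := hP1 k
    have h2 := hfacpos k
    apply div_le_div_of_nonneg_left (by positivity) h2
    nlinarith
  set S : ℝ := ∑' k, g k with hS
  have hS1 : 1 ≤ S := by
    have h := Summable.le_tsum hgsum 0 (fun j _ => (hgpos j).le)
    simpa [hg, hP] using h
  have hSpos : 0 < S := lt_of_lt_of_le one_pos hS1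
  have hz2q : z^2 = 4*q := by rw [hq]; ring
  -- cosh z series in terms of q
  set c : ℕ → ℝ := fun k => q^k / (k.factorial * D k) with hc
  have hcterm : ∀ k : ℕ, z^(2*k) / ((2*k).factorial : ℝ) = c k := by
    intro k
    have hDk : (∏ j ∈ Finset.range k, ((j:ℝ) + 1/2)) = D k := rfl
    rw [pow_mul, hz2q, fact_two_mul k, mul_pow, hDk]
    show (4:ℝ)^k * q^k / ((4:ℝ)^k * ↑k.factorial * D k) = q^k / (↑k.factorial * D k)
    have h4 : ((4:ℝ)^k) ≠ 0 := by positivity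
    have h5 : ((k.factorial:ℝ)) ≠ 0 := (hfacpos k).ne'
    have h6 : D k ≠ 0 := (hDpos k).ne'
    field_simp
  have hcoshz : Real.cosh z = ∑' k, c k := by
    rw [cosh_tsum z]
    exact tsum_congr hcterm
  have hcsum : Summable c := by
    apply Summable.of_nonneg_of_le
      (fun k => (div_pos (pow_pos hqpos k) (mul_pos (hfacpos k) (hDpos k))).le)
      _ (Real.summable_pow_div_factorial (2*q))
    intro k
    have hhalf : (1/2:ℝ)^k ≤ D k := by
      rw [hD]
      calc (1/2:ℝ)^k = ∏ _j ∈ Finset.range k, (1/2:ℝ) := by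
            rw [Finset.prod_const, Finset.card_range]
        _ ≤ _ := by
            apply Finset.prod_le_prod (fun j _ => by norm_num)
            intro j _
            have : (0:ℝ) ≤ j := Nat.cast_nonneg j
            linarith
    have h2 : (2*q)^k / (k.factorial : ℝ) = q^k / (k.factorial * (1/2:ℝ)^k) := by
      rw [mul_pow]
      have h5 : ((k.factorial:ℝ)) ≠ 0 := (hfacpos k).ne'
      have h7 : ((1/2:ℝ)^k) ≠ 0 := by positivity
      field_simp
      ring_nf; rw [← mul_pow]; norm_num
    rw [h2]
    apply div_le_div_of_nonneg_left (by positivity) (by positivity)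
    exact mul_le_mul_of_nonneg_left hhalf (hfacpos k).le
  -- upper bound : S < cosh z
  have hupper : S < Real.cosh z := by
    rw [hcoshz]
    apply Summable.tsum_lt_tsum_of_nonneg (fun k => (hgpos k).le) _ _ hcsum (i := 1)
    · intro k
      apply div_le_div_of_nonneg_left (by positivity) (mul_pos (hfacpos k) (hDpos k))
      apply mul_le_mul_of_nonneg_left _ (hfacpos k).le
      rw [hD, hP]
      apply Finset.prod_le_prod
      · intro j _
        have : (0:ℝ) ≤ j := Nat.cast_nonneg j
        linarith
      · intro j _
        linarith
    · show g 1 < c 1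
      have hD1 : D 1 = 1/2 := by
        show (∏ j ∈ Finset.range 1, ((j:ℝ) + 1/2)) = 1/2
        rw [Finset.prod_range_one]; norm_num
      have hP1' : P 1 = ν + 1 := by
        show (∏ j ∈ Finset.range 1, (ν + 1 + (j:ℝ))) = ν + 1
        rw [Finset.prod_range_one]; norm_num
      show q^1 / (↑(Nat.factorial 1) * P 1) < q^1 / (↑(Nat.factorial 1) * D 1)
      rw [hD1, hP1']
      norm_num
      apply div_lt_div_of_pos_left hqpos (by norm_num)
      linarith
  -- lower bound : cosh y < S where y = z / sqrt (2(ν+1))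
  set w : ℝ := 2*(ν+1) with hw
  have hwpos : (0:ℝ) < w := by rw [hw]; linarith
  set y : ℝ := z / Real.sqrt w with hy
  have hsq : Real.sqrt w ^ 2 = w := Real.sq_sqrt hwpos.le
  have hsqrtpos : 0 < Real.sqrt w := Real.sqrt_pos.mpr hwpos
  have hypos : 0 < y := div_pos hz hsqrtpos
  have hy2 : y^2 = 4*q/w := by
    rw [hy, div_pow, hsq, hz2q]
  set f : ℕ → ℝ := fun k => q^k / (k.factorial * (w^k * D k)) with hf
  have hfterm : ∀ k : ℕ, y^(2*k) / ((2*k).factorial : ℝ) = f k := by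
    intro k
    have hDk : (∏ j ∈ Finset.range k, ((j:ℝ) + 1/2)) = D k := rfl
    rw [pow_mul, hy2, fact_two_mul k, div_pow, mul_pow, hDk]
    show (4:ℝ)^k * q^k / w^k / ((4:ℝ)^k * ↑k.factorial * D k)
        = q^k / (↑k.factorial * (w^k * D k))
    have h4 : ((4:ℝ)^k) ≠ 0 := by positivity
    have h5 : ((k.factorial:ℝ)) ≠ 0 := (hfacpos k).ne'
    have h6 : D k ≠ 0 := (hDpos k).ne'
    have h7 : w^k ≠ 0 := by positivity
    field_simp
  have hcoshy : Real.cosh y = ∑' k, f k := by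
    rw [cosh_tsum y]
    exact tsum_congr hfterm
  have hPwD : ∀ k, P k ≤ w^k * D k := by
    intro k
    have hprod : w^k * D k = ∏ j ∈ Finset.range k, (w * ((j:ℝ) + 1/2)) := by
      rw [Finset.prod_mul_distrib, Finset.prod_const, Finset.card_range, hD]
    rw [hprod, hP]
    apply Finset.prod_le_prod
    · intro j _
      have : (0:ℝ) ≤ j := Nat.cast_nonneg j
      positivity
    · intro j _
      have hj : (0:ℝ) ≤ j := Nat.cast_nonneg j
      have := mul_nonneg hj (by linarith : (0:ℝ) ≤ 2*ν + 1)
      rw [hw]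
      nlinarith
  have hlow : Real.cosh y < S := by
    rw [hcoshy]
    apply Summable.tsum_lt_tsum_of_nonneg _ _ _ hgsum (i := 2)
    · intro k
      have : 0 < f k := div_pos (pow_pos hqpos k)
        (mul_pos (hfacpos k) (mul_pos (pow_pos hwpos k) (hDpos k)))
      exact this.le
    · intro k
      apply div_le_div_of_nonneg_left (by positivity) (mul_pos (hfacpos k) (hPpos k))
      exact mul_le_mul_of_nonneg_left (hPwD k) (hfacpos k).le
    · show f 2 < g 2
      have hD2 : D 2 = 3/4 := by
        show (∏ j ∈ Finset.range 2, ((j:ℝ) + 1/2)) = 3/4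
        rw [Finset.prod_range_succ, Finset.prod_range_one]
        norm_num
      have hP2 : P 2 = (ν+1)*(ν+2) := by
        show (∏ j ∈ Finset.range 2, (ν + 1 + (j:ℝ))) = (ν+1)*(ν+2)
        rw [Finset.prod_range_succ, Finset.prod_range_one]
        push_cast
        ring
      show q^2 / (↑(Nat.factorial 2) * (w^2 * D 2)) < q^2 / (↑(Nat.factorial 2) * P 2)
      rw [hD2, hP2]
      have hfac2 : ((Nat.factorial 2 : ℕ) : ℝ) = 2 := by norm_num [Nat.factorial]
      rw [hfac2]
      apply div_lt_div_of_pos_left (by positivity) (by positivity)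
      rw [hw]
      nlinarith
  -- rewrite besselI
  have hgamma : (0:ℝ) < Real.Gamma (ν + 1) := Real.Gamma_pos_of_pos (by linarith)
  have hbessel : besselI ν z = ((z/2)^ν / Real.Gamma (ν+1)) * S := by
    rw [hS, ← tsum_mul_left]
    unfold besselI
    apply tsum_congr
    intro k
    have hGam : Real.Gamma (ν + k + 1) = Real.Gamma (ν+1) * P k := gamma_prod ν hν0 k
    have hrpow : (z/2) ^ (ν + 2*(k:ℝ)) = (z/2)^ν * q^k := by
      rw [Real.rpow_add hz2]
      congr 1
      rw [show (2*(k:ℝ)) = ((2*k : ℕ):ℝ) by push_cast; ring, Real.rpow_natCast, pow_mul, hq]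
    rw [hGam, hrpow]
    simp only [hg]
    have h1 : Real.Gamma (ν+1) ≠ 0 := hgamma.ne'
    have h2 : (k.factorial : ℝ) ≠ 0 := (hfacpos k).ne'
    have h3 : P k ≠ 0 := (hPpos k).ne'
    field_simp
  have hrppos : (0:ℝ) < (z/2)^ν := Real.rpow_pos_of_pos hz2 ν
  have hlog : Real.log (besselI ν z) =
      ν * Real.log (z/2) - Real.log (Real.Gamma (ν+1)) + Real.log S := by
    rw [hbessel, Real.log_mul (by positivity) hSpos.ne',
      Real.log_div hrppos.ne' hgamma.ne', Real.log_rpow hz2]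
  constructor
  · -- lower bound
    have h1 : Real.log (Real.cosh y) < Real.log S := Real.log_lt_log (Real.cosh_pos y) hlow
    have hyz : y ≤ z := by
      rw [hy]
      have hs1 : 1 ≤ Real.sqrt w := by
        rw [Real.one_le_sqrt]
        rw [hw]; linarith
      calc z / Real.sqrt w ≤ z / 1 := by
            apply div_le_div_of_nonneg_left hz.le one_pos hs1
        _ = z := by ring
    have h2 := logcosh_div_sq_antitone hypos hyz
    have h3 : Real.log (Real.cosh z) / z^2 * y^2 ≤ Real.log (Real.cosh y) := by
      have := mul_le_mul_of_nonneg_right h2 (sq_nonneg y)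
      rwa [div_mul_cancel₀ _ (by positivity : y^2 ≠ 0)] at this
    have h4 : Real.log (Real.cosh z) / z^2 * y^2
        = 1/(2*(ν+1)) * Real.log (Real.cosh z) := by
      rw [hy2, ← hw, hz2q]
      have : w ≠ 0 := hwpos.ne'
      have : (4:ℝ)*q ≠ 0 := by positivity
      field_simp
    rw [hlog]
    rw [h4] at h3
    linarith
  · -- upper bound
    have h1 : Real.log S < Real.log (Real.cosh z) := Real.log_lt_log hSpos hupper
    rw [hlog]
    linarith
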